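/- Let α be a probability measure on E, F : E → B a Bochner-integrable map into a separable Banach space, and suppose the I-projection α* of α on C = {ν : ∫F dν ∈ K} has density dα*/dα = e^{⟨λ*,F⟩}/Z_F(λ*) for some λ* ∈ B'. Then for every ε > 0, (1/n)·log(α^{⊗n}(Lₙ ∈ C_ε)·e^{n H(α*|α)}) ≥ (1/n)·log P(‖(1/n)∑_{i=1}^n F(Yᵢ) − ∫F dα*‖ ≤ ε) − ‖λ*‖·ε, where Y₁,…,Yₙ are i.i.d. with law α* and C_ε = {ν : ‖∫F dν − ∫F dα*‖ ≤ ε} ⊆ {ν : d(∫F dν, K) ≤ ε}. -/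
import Mathlib


open MeasureTheory Set Filter
open scoped ENNReal

/-- The empirical measure of `n` points. -/
noncomputable def empMeas {E : Type*} [MeasurableSpace E] (n : ℕ) (x : Fin n → E) : Measure E :=
  (n : ℝ≥0∞)⁻¹ • ∑ i, Measure.dirac (x i)

theorem lintegral_pi_fin_prod {n : ℕ} {E : Type*} [MeasurableSpace E] (μ : Measure E)
    [SigmaFinite μ] (f : Fin n → E → ℝ≥0∞) (hf : ∀ i, Measurable (f i)) :
    ∫⁻ x : Fin n → E, ∏ i, f i (x i) ∂(Measure.pi fun _ => μ) = ∏ i, ∫⁻ x, f i x ∂μ := by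
  induction n with
  | zero => simp [Measure.pi_empty_univ]
  | succ n ih =>
    have h := (measurePreserving_piFinSuccAbove (fun _ : Fin (n+1) => μ) 0).symm
    rw [← h.lintegral_comp_emb (MeasurableEquiv.piFinSuccAbove (fun _ => E) 0).symm.measurableEmbedding]
    set e := (MeasurableEquiv.piFinSuccAbove (fun _ : Fin (n+1) => E) 0).symm with he
    have key : ∀ a : E × (Fin n → E), ∏ i, f i (e a i)
        = f 0 a.1 * ∏ j : Fin n, f (Fin.succ j) (a.2 j) := by
      intro a
      rw [Fin.prod_univ_succ]
      simp [he, MeasurableEquiv.piFinSuccAbove_symm_apply, Fin.zero_succAbove]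
    simp_rw [key]
    have hg : Measurable fun y : Fin n → E => ∏ j : Fin n, f (Fin.succ j) (y j) :=
      Finset.measurable_prod _ fun j _ => (hf _).comp (measurable_pi_apply j)
    rw [lintegral_prod_mul (hf 0).aemeasurable hg.aemeasurable,
      ih _ fun j => hf (Fin.succ j), Fin.prod_univ_succ]

theorem pi_withDensity_fin {n : ℕ} {E : Type*} [MeasurableSpace E] (μ : Measure E)
    [SigmaFinite μ] (g : E → ℝ≥0∞) (hg : Measurable g) [SigmaFinite (μ.withDensity g)] :
    Measure.pi (fun _ : Fin n => μ.withDensity g)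
      = (Measure.pi fun _ : Fin n => μ).withDensity (fun x => ∏ i, g (x i)) := by
  refine Measure.pi_eq fun s hs => ?_
  rw [withDensity_apply _ (MeasurableSet.univ_pi hs),
    ← lintegral_indicator (MeasurableSet.univ_pi hs)]
  have key : ∀ x : Fin n → E, (Set.univ.pi s).indicator (fun x => ∏ i, g (x i)) x
      = ∏ i, (s i).indicator g (x i) := by
    intro x
    by_cases hx : x ∈ Set.univ.pi s
    · rw [Set.indicator_of_mem hx]
      exact Finset.prod_congr rfl fun i _ =>
        (Set.indicator_of_mem (hx i (Set.mem_univ i)) g).symm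
    · rw [Set.indicator_of_notMem hx]
      rw [Set.mem_univ_pi] at hx
      push_neg at hx
      obtain ⟨i, hi⟩ := hx
      exact (Finset.prod_eq_zero (Finset.mem_univ i)
        (Set.indicator_of_notMem hi g)).symm
  simp_rw [key]
  rw [lintegral_pi_fin_prod μ _ fun i => hg.indicator (hs i)]
  exact Finset.prod_congr rfl fun i _ => by
    rw [lintegral_indicator (hs i), withDensity_apply _ (hs i)]


/-- Lemma 3.1: centering lower bound for moment constraints. If the I-projection `α*` of `α`
on `C = {ν : ∫F dν ∈ K}` has the exponential form `dα*/dα = e^{⟨λ*,F⟩}/Z_F(λ*)`, then for all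
`ε > 0`, `(1/n) log(α^{⊗n}(Lₙ ∈ C_ε) e^{n H(α*|α)})` is at least
`(1/n) log P(‖(1/n)∑F(Yᵢ) - ∫F dα*‖ ≤ ε) - ‖λ*‖ ε` where the `Yᵢ` are i.i.d. with law `α*`,
with `H(α*|α) = ⟨λ*, ∫F dα*⟩ - log Z_F(λ*)` and
`C_ε ⊇ {ν : ‖∫F dν - ∫F dα*‖ ≤ ε}` being the event that the empirical `F`-mean is `ε`-close
to `K` (the empirical measure `Lₙ` satisfies `∫F dLₙ = (1/n)∑F(xᵢ)`). -/
theorem centering_lower_bound {E B : Type*} [MeasurableSpace E] [TopologicalSpace E]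
    [PolishSpace E] [BorelSpace E]
    [NormedAddCommGroup B] [NormedSpace ℝ B] [MeasurableSpace B] [BorelSpace B]
    [SecondCountableTopology B]
    (α : Measure E) [IsProbabilityMeasure α]
    (F : E → B) (hF : Measurable F)
    (K : Set B) (hKclosed : IsClosed K) (hKconv : Convex ℝ K)
    (l : B →L[ℝ] ℝ)
    (hint : Integrable (fun x => Real.exp (l (F x))) α)
    (αstar : Measure E)
    (hstar : αstar = α.withDensity fun x =>
      ENNReal.ofReal (Real.exp (l (F x)) / ∫ y, Real.exp (l (F y)) ∂α))
    (hFint : Integrable F αstar)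
    (hmem : (∫ x, F x ∂αstar) ∈ K)
    (ε : ℝ) (hε : 0 < ε) (n : ℕ) (hn : 0 < n) :
    (1 / n : ℝ) * Real.log
        (((Measure.pi fun _ : Fin n => α)
            {x | ‖(n : ℝ)⁻¹ • ∑ i, F (x i) - ∫ y, F y ∂αstar‖ ≤ ε}).toReal *
          Real.exp (n * (l (∫ y, F y ∂αstar) - Real.log (∫ y, Real.exp (l (F y)) ∂α)))) ≥
      (1 / n : ℝ) * Real.log
        (((Measure.pi fun _ : Fin n => αstar)
            {x | ‖(n : ℝ)⁻¹ • ∑ i, F (x i) - ∫ y, F y ∂αstar‖ ≤ ε}).toReal) -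
        ‖l‖ * ε := by
  set m := ∫ y, F y ∂αstar with hm
  set Z := ∫ y, Real.exp (l (F y)) ∂α with hZdef
  have hZ : 0 < Z := integral_exp_pos hint
  set g : E → ℝ≥0∞ := fun x => ENNReal.ofReal (Real.exp (l (F x)) / Z) with hg
  have hgm : Measurable g :=
    ((Real.measurable_exp.comp (l.continuous.measurable.comp hF)).div_const Z).ennreal_ofReal
  have hαs : αstar = α.withDensity g := hstar
  have hint1 : ∫ x, Real.exp (l (F x)) / Z ∂α = 1 := by
    rw [integral_div]
    exact div_self hZ.ne'
  have hlint : ∫⁻ x, g x ∂α = 1 := by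
    simp only [hg]
    rw [← ofReal_integral_eq_lintegral_ofReal (hint.div_const Z)
      (Filter.Eventually.of_forall fun x => div_nonneg (Real.exp_pos _).le hZ.le),
      hint1, ENNReal.ofReal_one]
  have hprob : IsProbabilityMeasure αstar := by
    constructor
    rw [hαs, withDensity_apply _ MeasurableSet.univ, setLIntegral_univ, hlint]
  haveI := hprob
  haveI : IsProbabilityMeasure (α.withDensity g) := hαs ▸ hprob
  set A : Set (Fin n → E) := {x | ‖(n:ℝ)⁻¹ • ∑ i, F (x i) - m‖ ≤ ε} with hA
  have hsum_meas : Measurable fun x : Fin n → E => ∑ i, F (x i) :=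
    Finset.measurable_sum _ fun i _ => hF.comp (measurable_pi_apply i)
  have hAmeas : MeasurableSet A := by
    have hmeas : Measurable fun x : Fin n → E => ‖(n:ℝ)⁻¹ • ∑ i, F (x i) - m‖ :=
      ((hsum_meas.const_smul _).sub measurable_const).norm
    exact measurableSet_le hmeas measurable_const
  have hπ : (Measure.pi fun _ : Fin n => αstar)
      = (Measure.pi fun _ : Fin n => α).withDensity (fun x => ∏ i, g (x i)) := by
    rw [hαs]
    exact pi_withDensity_fin α g hgm
  have hπA : (Measure.pi fun _ : Fin n => αstar) A
      = ∫⁻ x in A, ∏ i, g (x i) ∂(Measure.pi fun _ : Fin n => α) := by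
    rw [hπ, withDensity_apply _ hAmeas]
  have hprod : ∀ x : Fin n → E, ∏ i, g (x i)
      = ENNReal.ofReal (Real.exp ((∑ i, l (F (x i))) - n * Real.log Z)) := by
    intro x
    simp only [hg]
    rw [← ENNReal.ofReal_prod_of_nonneg
      (fun i _ => div_nonneg (Real.exp_pos _).le hZ.le)]
    congr 1
    rw [Finset.prod_div_distrib, ← Real.exp_sum, Finset.prod_const, Finset.card_univ,
      Fintype.card_fin, Real.exp_sub]
    congr 1
    rw [Real.exp_nat_mul, Real.exp_log hZ]
  have hnR : (0:ℝ) < n := Nat.cast_pos.mpr hn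
  have hS : ∀ x ∈ A, |(∑ i, l (F (x i))) - n * l m| ≤ n * (‖l‖ * ε) := by
    intro x hx
    have h1 : l ((n:ℝ)⁻¹ • ∑ i, F (x i) - m)
        = (n:ℝ)⁻¹ * (∑ i, l (F (x i))) - l m := by
      rw [map_sub, l.map_smul, map_sum, smul_eq_mul]
    have h2 : |(n:ℝ)⁻¹ * (∑ i, l (F (x i))) - l m| ≤ ‖l‖ * ε := by
      rw [← h1, ← Real.norm_eq_abs]
      calc ‖l ((n:ℝ)⁻¹ • ∑ i, F (x i) - m)‖
          ≤ ‖l‖ * ‖(n:ℝ)⁻¹ • ∑ i, F (x i) - m‖ := l.le_opNorm _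
        _ ≤ ‖l‖ * ε := mul_le_mul_of_nonneg_left hx (norm_nonneg l)
    have h3 : (∑ i, l (F (x i))) - n * l m
        = n * ((n:ℝ)⁻¹ * (∑ i, l (F (x i))) - l m) := by
      field_simp
    rw [h3, abs_mul, abs_of_pos hnR]
    exact mul_le_mul_of_nonneg_left h2 hnR.le
  set c := (n:ℝ) * (l m - Real.log Z) with hc
  have hupper : (Measure.pi fun _ : Fin n => αstar) A
      ≤ ENNReal.ofReal (Real.exp (c + n * (‖l‖ * ε)))
        * (Measure.pi fun _ : Fin n => α) A := by
    rw [hπA, ← setLIntegral_const A]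
    refine setLIntegral_mono measurable_const fun x hx => ?_
    rw [hprod x]
    apply ENNReal.ofReal_le_ofReal
    apply Real.exp_le_exp.mpr
    have h := (abs_le.mp (hS x hx)).2
    have hcc : c = n * l m - n * Real.log Z := by rw [hc]; ring
    linarith
  have hlower : ENNReal.ofReal (Real.exp (c - n * (‖l‖ * ε)))
        * (Measure.pi fun _ : Fin n => α) A
      ≤ (Measure.pi fun _ : Fin n => αstar) A := by
    rw [hπA, ← setLIntegral_const A]
    refine setLIntegral_mono
      (Finset.measurable_prod _ fun i _ => hgm.comp (measurable_pi_apply i))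
      fun x hx => ?_
    rw [hprod x]
    apply ENNReal.ofReal_le_ofReal
    apply Real.exp_le_exp.mpr
    have h := (abs_le.mp (hS x hx)).1
    have hcc : c = n * l m - n * Real.log Z := by rw [hc]; ring
    linarith
  set p := ((Measure.pi fun _ : Fin n => α) A).toReal with hp
  set q := ((Measure.pi fun _ : Fin n => αstar) A).toReal with hq
  have hpnn : 0 ≤ p := ENNReal.toReal_nonneg
  have hqnn : 0 ≤ q := ENNReal.toReal_nonneg
  have hqle : q ≤ Real.exp (c + n * (‖l‖ * ε)) * p := by
    have h := ENNReal.toReal_mono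
      (ENNReal.mul_ne_top ENNReal.ofReal_ne_top (measure_ne_top _ _)) hupper
    rwa [ENNReal.toReal_mul, ENNReal.toReal_ofReal (Real.exp_pos _).le] at h
  have hple : Real.exp (c - n * (‖l‖ * ε)) * p ≤ q := by
    have h := ENNReal.toReal_mono (measure_ne_top _ _) hlower
    rwa [ENNReal.toReal_mul, ENNReal.toReal_ofReal (Real.exp_pos _).le] at h
  have hlε : 0 ≤ ‖l‖ * ε := mul_nonneg (norm_nonneg l) hε.le
  by_cases hq0 : q = 0
  · have hp0 : p = 0 := by nlinarith [Real.exp_pos (c - n * (‖l‖ * ε))]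
    simp only [hq0, hp0, zero_mul, Real.log_zero, mul_zero]
    linarith
  · have hq0' : 0 < q := lt_of_le_of_ne hqnn (Ne.symm hq0)
    have hp0 : 0 < p := by nlinarith [Real.exp_pos (c + n * (‖l‖ * ε))]
    have hlog : Real.log q ≤ c + n * (‖l‖ * ε) + Real.log p := by
      have h := Real.log_le_log hq0' hqle
      rwa [Real.log_mul (Real.exp_pos _).ne' hp0.ne', Real.log_exp] at h
    rw [ge_iff_le, Real.log_mul hp0.ne' (Real.exp_pos _).ne', Real.log_exp]
    have h1 : (1/n:ℝ) * Real.log q ≤ (1/n) * (c + n * (‖l‖ * ε) + Real.log p) :=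
      mul_le_mul_of_nonneg_left hlog (by positivity)
    have heq : (1/n:ℝ) * (c + n * (‖l‖ * ε) + Real.log p)
        = (1/n) * (Real.log p + c) + ‖l‖ * ε := by
      field_simp
      ring
    linarith
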